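/- Let E be an infinite-dimensional reflexive Banach space of cardinality 𝔠. Then there exists a norm ‖·‖₂ on E, not equivalent to the original norm, such that (E, ‖·‖₂) is a Banach space that is not reflexive. -/

import Mathlib

open NormedSpace Cardinal Function

universe u
variable {𝕜 E : Type u} [RCLike 𝕜] [NormedAddCommGroup E] [NormedSpace 𝕜 E]

/-- nonzero vector killed by finitely many functionals -/
lemma aux_exists_ker (hinf : ¬ FiniteDimensional 𝕜 E) {n : ℕ} (f : Fin n → (E →L[𝕜] 𝕜)) :
    ∃ a : E, a ≠ 0 ∧ ∀ i, f i a = 0 := by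
  by_contra h
  push_neg at h
  have hinj : Function.Injective (LinearMap.pi (fun i => (f i : E →ₗ[𝕜] 𝕜))) := by
    rw [injective_iff_map_eq_zero]
    intro a ha
    by_contra ha0
    obtain ⟨i, hi⟩ := h a ha0
    exact hi (congrFun ha i)
  exact hinf (FiniteDimensional.of_injective _ hinj)

/-- separating functional vanishing on a finite family -/
lemma aux_exists_sep [CompleteSpace 𝕜] {n : ℕ} (x : Fin n → E) {a : E}
    (ha : a ∉ Submodule.span 𝕜 (Set.range x)) :
    ∃ g : E →L[𝕜] 𝕜, g a = 1 ∧ ∀ i, g (x i) = 0 := by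
  set W := Submodule.span 𝕜 (Set.range x)
  have : FiniteDimensional 𝕜 W := FiniteDimensional.span_of_finite 𝕜 (Set.finite_range x)
  have hclosed : IsClosed (W : Set E) := Submodule.closed_of_finiteDimensional W
  haveI : IsClosed (W : Set E) := hclosed
  have hma : (Submodule.Quotient.mk a : E ⧸ W) ≠ 0 := by
    simpa [Submodule.Quotient.mk_eq_zero] using ha
  obtain ⟨g₀, hg₀⟩ := SeparatingDual.exists_eq_one (R := 𝕜) hma
  refine ⟨⟨g₀.toLinearMap.comp W.mkQ, g₀.continuous.comp continuous_quot_mk⟩, ?_, ?_⟩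
  · simpa using hg₀
  · intro i
    have : (Submodule.Quotient.mk (x i) : E ⧸ W) = 0 := by
      rw [Submodule.Quotient.mk_eq_zero]
      exact Submodule.subset_span ⟨i, rfl⟩
    simp [this]

/-- one step of the biorthogonal construction -/
lemma aux_step (hinf : ¬ FiniteDimensional 𝕜 E) (n : ℕ) (p : Fin n → E × (E →L[𝕜] 𝕜)) :
    ∃ q : E × (E →L[𝕜] 𝕜),
      ((∀ i j, (p i).2 ((p j).1) = if i = j then 1 else 0) →
        ‖q.1‖ = 1 ∧ (∀ i, (p i).2 q.1 = 0) ∧ (∀ i, q.2 ((p i).1) = 0) ∧ q.2 q.1 = 1) := by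
  by_cases hb : ∀ i j, (p i).2 ((p j).1) = if i = j then 1 else 0
  · obtain ⟨a₀, ha₀, hker⟩ := aux_exists_ker hinf (fun i => (p i).2)
    set a : E := (‖a₀‖ : 𝕜)⁻¹ • a₀ with hadef
    have hna : ‖a‖ = 1 := by
      rw [hadef, norm_smul, norm_inv, RCLike.norm_ofReal, abs_norm]
      field_simp [norm_eq_zero.not.2 ha₀]
    have hkera : ∀ i, (p i).2 a = 0 := by
      intro i; rw [hadef, map_smul, hker i, smul_zero]
    have hasp : a ∉ Submodule.span 𝕜 (Set.range (fun i => (p i).1)) := by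
      intro hmem
      rw [Submodule.mem_span_range_iff_exists_fun] at hmem
      obtain ⟨c, hc⟩ := hmem
      have : ∀ i, c i = 0 := by
        intro i
        have := congrArg ((p i).2) hc
        rw [map_sum, hkera i] at this
        exact (by simpa [hb] using this.symm : (0:𝕜) = c i).symm
      have : a = 0 := by rw [← hc]; simp [this]
      rw [this, norm_zero] at hna; norm_num at hna
    obtain ⟨g, hga, hgx⟩ := aux_exists_sep (fun i => (p i).1) hasp
    exact ⟨(a, g), fun _ => ⟨hna, hkera, hgx, hga⟩⟩
  · exact ⟨(0, 0), fun h => absurd h hb⟩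

/-- the recursively defined biorthogonal sequence -/
noncomputable def bios (hinf : ¬ FiniteDimensional 𝕜 E) : ℕ → E × (E →L[𝕜] 𝕜)
  | n => (aux_step hinf n (fun i : Fin n => bios hinf i)).choose
  termination_by n => n
  decreasing_by all_goals first | exact i.isLt | exact j.isLt

lemma bios_unfold (hinf : ¬ FiniteDimensional 𝕜 E) (n : ℕ) :
    bios hinf n = (aux_step hinf n (fun i : Fin n => bios hinf i)).choose := by
  rw [bios]

lemma bios_key (hinf : ¬ FiniteDimensional 𝕜 E) : ∀ n : ℕ,
    (∀ k, k < n → ‖(bios hinf k).1‖ = 1) ∧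
    (∀ i j : Fin n, (bios hinf i).2 ((bios hinf j).1) = if i = j then 1 else 0) := by
  intro n
  induction n with
  | zero => exact ⟨fun k hk => absurd hk (Nat.not_lt_zero k), fun i _ => i.elim0⟩
  | succ n IH =>
    obtain ⟨IHnorm, IHorth⟩ := IH
    have hs := (aux_step hinf n (fun i : Fin n => bios hinf i)).choose_spec IHorth
    rw [← bios_unfold hinf n] at hs
    obtain ⟨hn1, hk1, hk2, hk3⟩ := hs
    constructor
    · intro k hk
      rcases Nat.lt_succ_iff_lt_or_eq.mp hk with h | h
      · exact IHnorm k h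
      · rw [h]; exact hn1
    · intro i j
      by_cases hi : (i : ℕ) < n <;> by_cases hj : (j : ℕ) < n
      · have := IHorth ⟨i, hi⟩ ⟨j, hj⟩
        simpa [Fin.ext_iff] using this
      · have hjn : (j : ℕ) = n := Nat.eq_of_lt_succ_of_not_lt j.isLt hj
        have hij : i ≠ j := by
          intro h; rw [h] at hi; omega
        have : (bios hinf (⟨i, hi⟩ : Fin n)).2 ((bios hinf n).1) = 0 := hk1 ⟨i, hi⟩
        simp only [Fin.ext_iff]
        rw [if_neg (by omega)]
        rw [show ((j:ℕ)) = n from hjn]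
        exact this
      · have hin : (i : ℕ) = n := Nat.eq_of_lt_succ_of_not_lt i.isLt hi
        simp only [Fin.ext_iff]
        rw [if_neg (by omega)]
        have : (bios hinf n).2 ((bios hinf (⟨j, hj⟩ : Fin n)).1) = 0 := hk2 ⟨j, hj⟩
        rw [show ((i:ℕ)) = n from hin]
        exact this
      · have hin : (i : ℕ) = n := Nat.eq_of_lt_succ_of_not_lt i.isLt hi
        have hjn : (j : ℕ) = n := Nat.eq_of_lt_succ_of_not_lt j.isLt hj
        simp only [Fin.ext_iff]
        rw [if_pos (by omega)]
        have : (bios hinf n).2 ((bios hinf n).1) = 1 := hk3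
        rw [show ((i:ℕ)) = n from hin, show ((j:ℕ)) = n from hjn]
        exact this

/-- global biorthogonality -/
lemma bios_biorth (hinf : ¬ FiniteDimensional 𝕜 E) (i j : ℕ) :
    (bios hinf i).2 ((bios hinf j).1) = if i = j then (1:𝕜) else 0 := by
  have := (bios_key hinf (max i j + 1)).2 ⟨i, by omega⟩ ⟨j, by omega⟩
  simpa [Fin.ext_iff] using this

lemma bios_norm (hinf : ¬ FiniteDimensional 𝕜 E) (n : ℕ) : ‖(bios hinf n).1‖ = 1 :=
  (bios_key hinf (n+1)).1 n (Nat.lt_succ_self n)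

lemma aux_summable (hinf : ¬ FiniteDimensional 𝕜 E) [CompleteSpace E] {t : ℝ}
    (h0 : 0 ≤ t) (h1 : t < 1) :
    Summable (fun n : ℕ => ((t ^ n : ℝ) : 𝕜) • (bios hinf n).1) := by
  apply Summable.of_norm
  have : ∀ n : ℕ, ‖((t ^ n : ℝ) : 𝕜) • (bios hinf n).1‖ = t ^ n := by
    intro n
    rw [norm_smul, RCLike.norm_ofReal, bios_norm hinf n, mul_one, abs_pow,
      abs_of_nonneg h0]
  rw [funext this]
  exact summable_geometric_of_lt_one h0 h1

lemma aux_rank_ge [CompleteSpace E] (hinf : ¬ FiniteDimensional 𝕜 E) :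
    Cardinal.continuum ≤ Module.rank 𝕜 E := by
  classical
  set x : ℕ → E := fun n => (bios hinf n).1
  set f : ℕ → (E →L[𝕜] 𝕜) := fun n => (bios hinf n).2
  set v : Set.Ioo (0:ℝ) 1 → E := fun t => ∑' n : ℕ, (((t:ℝ) ^ n : ℝ) : 𝕜) • x n with hv
  have happly : ∀ (t : Set.Ioo (0:ℝ) 1) (m : ℕ), f m (v t) = ((t:ℝ) : 𝕜) ^ m := by
    intro t m
    have hsum := aux_summable hinf (le_of_lt t.2.1) t.2.2
    rw [hv]
    rw [ContinuousLinearMap.map_tsum _ hsum]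
    have : ∀ n : ℕ, f m ((((t:ℝ) ^ n : ℝ) : 𝕜) • x n) =
        if m = n then ((t:ℝ) : 𝕜) ^ m else 0 := by
      intro n
      rw [map_smul, smul_eq_mul, bios_biorth hinf m n]
      by_cases h : m = n
      · simp [h, RCLike.ofReal_pow]
      · simp [h]
    rw [funext this, tsum_eq_single m (fun n hn => by rw [if_neg (Ne.symm hn)]), if_pos rfl]
  have hli : LinearIndependent 𝕜 v := by
    rw [linearIndependent_iff']
    intro s g hsum i hi
    set k := s.card
    set e : Fin k ≃ {a // a ∈ s} := s.equivFin.symm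
    set u : Fin k → 𝕜 := fun a => (((e a : Set.Ioo (0:ℝ) 1) : ℝ) : 𝕜) with hu
    have hu_inj : Function.Injective u := by
      intro a b hab
      simp only [hu, RCLike.ofReal_inj] at hab
      exact e.injective (Subtype.ext (Subtype.ext hab))
    have hw : (fun a : Fin k => g (e a)) = 0 := by
      apply Matrix.eq_zero_of_forall_pow_sum_mul_pow_eq_zero hu_inj
      intro m
      have h1 : f m (∑ i ∈ s, g i • v i) = 0 := by rw [hsum, map_zero]
      rw [map_sum] at h1
      have h2 : ∀ i ∈ s, f m (g i • v i) = g i * ((i : Set.Ioo (0:ℝ) 1) : ℝ) ^ (m:ℕ) := by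
        intro i _
        rw [map_smul, smul_eq_mul, happly i m]
      rw [Finset.sum_congr rfl h2] at h1
      have hsc := Equiv.sum_comp e (fun i : {a // a ∈ s} =>
        g i * ((((i : Set.Ioo (0:ℝ) 1) : ℝ)) : 𝕜) ^ (m:ℕ))
      rw [Finset.sum_coe_sort s (fun i =>
        g i * ((((i : Set.Ioo (0:ℝ) 1) : ℝ)) : 𝕜) ^ (m:ℕ))] at hsc
      have h3 : ∑ i ∈ s, g i * ((((i : Set.Ioo (0:ℝ) 1) : ℝ)) : 𝕜) ^ (m:ℕ) = 0 := by
        exact h1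
      simp only [hu]
      exact hsc.trans h3
    have := congrFun hw (e.symm ⟨i, hi⟩)
    simpa using this
  have hcard := hli.cardinal_lift_le_rank
  rw [Cardinal.mk_Ioo_real zero_lt_one, Cardinal.lift_continuum] at hcard
  simpa using hcard

section Czero

open ZeroAtInftyContinuousMap Filter

variable (𝕜)

/-- a finitely supported function, as an element of `C₀(ℕ, 𝕜)` -/
noncomputable def fsc (g : ℕ → 𝕜) (hg : (Function.support g).Finite) :
    ZeroAtInftyContinuousMap ℕ 𝕜 :=
  ⟨⟨g, continuous_of_discreteTopology⟩, by
    rw [cocompact_eq_cofinite]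
    apply Filter.Tendsto.congr' _ tendsto_const_nhds
    rw [Filter.eventuallyEq_iff_exists_mem]
    exact ⟨(Function.support g)ᶜ, by rwa [Filter.mem_cofinite, compl_compl],
      fun n hn => (Function.notMem_support.mp hn).symm⟩⟩

@[simp] lemma fsc_apply (g : ℕ → 𝕜) (hg) (n : ℕ) : fsc 𝕜 g hg n = g n := rfl

/-- coercion to functions as a linear map -/
def czeroCoe : ZeroAtInftyContinuousMap ℕ 𝕜 →ₗ[𝕜] (ℕ → 𝕜) where
  toFun f := fun n => f n
  map_add' _ _ := rfl
  map_smul' _ _ := rfl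

lemma czeroCoe_injective : Function.Injective (czeroCoe 𝕜) := by
  intro f g h
  ext n
  exact congrFun h n

lemma czero_not_finiteDimensional :
    ¬ FiniteDimensional 𝕜 (ZeroAtInftyContinuousMap ℕ 𝕜) := by
  intro hfd
  set δ : ℕ → ZeroAtInftyContinuousMap ℕ 𝕜 := fun n =>
    fsc 𝕜 (Pi.single n 1) ((Set.finite_singleton n).subset (by
      intro m hm
      simp only [Function.mem_support] at hm
      by_contra hne
      exact hm (Pi.single_eq_of_ne (by simpa using hne) 1)))
  have hli : LinearIndependent 𝕜 δ := by
    apply LinearIndependent.of_comp (czeroCoe 𝕜)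
    have : (czeroCoe 𝕜) ∘ δ = fun n => Pi.single n (1:𝕜) := by
      ext n m
      rfl
    rw [this]
    rw [linearIndependent_iff']
    intro s c hsum j hj
    have h := congrFun hsum j
    simpa [Finset.sum_apply, Pi.single_apply, Finset.sum_ite_eq' s, hj] using h
  have h1 := hli.cardinal_lift_le_rank
  have h2 := Module.rank_lt_aleph0 𝕜 (ZeroAtInftyContinuousMap ℕ 𝕜)
  rw [Cardinal.mk_nat] at h1
  have : Cardinal.lift.{0,u} (Module.rank 𝕜 (ZeroAtInftyContinuousMap ℕ 𝕜)) <
      Cardinal.aleph0 := by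
    simpa using h2
  exact absurd (h1.trans_lt this) (by simp)

lemma czero_card_le : Cardinal.mk (ZeroAtInftyContinuousMap ℕ 𝕜) ≤ Cardinal.continuum := by
  have hk : Cardinal.mk 𝕜 ≤ Cardinal.continuum := by
    have hsurj : Function.Surjective (fun p : ℝ × ℝ => ((p.1 : 𝕜) + (p.2 : 𝕜) * RCLike.I)) := by
      intro z
      exact ⟨(RCLike.re z, RCLike.im z), RCLike.re_add_im z⟩
    have := Cardinal.lift_mk_le'.mpr ⟨Function.Embedding.ofSurjective _ hsurj⟩
    rw [Cardinal.mk_prod, Cardinal.mk_real] at this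
    simpa [Cardinal.lift_continuum] using this
  calc Cardinal.mk (ZeroAtInftyContinuousMap ℕ 𝕜)
      ≤ Cardinal.mk (ℕ → 𝕜) := Cardinal.mk_le_of_injective (czeroCoe_injective 𝕜)
    _ = Cardinal.mk 𝕜 ^ Cardinal.aleph0 := by
        rw [Cardinal.mk_arrow]
        simp
    _ ≤ Cardinal.continuum ^ Cardinal.aleph0 := by
        exact Cardinal.power_le_power_right hk
    _ = Cardinal.continuum := Cardinal.continuum_power_aleph0

end Czero

section Func

open ZeroAtInftyContinuousMap Filter

variable (𝕜)

/-- weights -/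
noncomputable def wgt (n : ℕ) : ℝ := (2:ℝ)⁻¹ ^ (n+1)

lemma wgt_pos (n : ℕ) : 0 < wgt n := by rw [wgt]; positivity

lemma wgt_eq : wgt = fun n => (2:ℝ)⁻¹ ^ n * 2⁻¹ := by
  funext n; rw [wgt, pow_succ]

lemma wgt_summable : Summable wgt := by
  rw [wgt_eq]
  exact (summable_geometric_of_lt_one (by norm_num) (by norm_num)).mul_right _

lemma wgt_tsum : ∑' n, wgt n = 1 := by
  rw [wgt_eq, tsum_mul_right, tsum_geometric_of_lt_one (by norm_num) (by norm_num)]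
  norm_num

lemma wgt_sum (N : ℕ) : ∑ n ∈ Finset.range N, wgt n = 1 - (2:ℝ)⁻¹ ^ N := by
  induction N with
  | zero => simp
  | succ N IH =>
    rw [Finset.sum_range_succ, IH, wgt, pow_succ]
    ring

local notation "CZ" => ZeroAtInftyContinuousMap ℕ 𝕜

lemma czero_apply_norm_le (x : CZ) (n : ℕ) : ‖x n‖ ≤ ‖x‖ := by
  rw [← ZeroAtInftyContinuousMap.norm_toBCF_eq_norm]
  exact x.toBCF.norm_coe_le_norm n

lemma Fsummand_summable (x : CZ) : Summable (fun n => ((wgt n : ℝ) : 𝕜) * x n) := by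
  apply Summable.of_norm
  apply Summable.of_nonneg_of_le (fun n => norm_nonneg _)
    (fun n => ?_) (wgt_summable.mul_right ‖x‖)
  rw [norm_mul, RCLike.norm_ofReal, abs_of_nonneg (wgt_pos n).le]
  exact mul_le_mul_of_nonneg_left (czero_apply_norm_le 𝕜 x n) (wgt_pos n).le

/-- the witness functional on c₀, as a linear map -/
noncomputable def Flin : CZ →ₗ[𝕜] 𝕜 where
  toFun x := ∑' n, ((wgt n : ℝ) : 𝕜) * x n
  map_add' x y := by
    simp only [ZeroAtInftyContinuousMap.coe_add, Pi.add_apply, mul_add]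
    exact Summable.tsum_add (Fsummand_summable 𝕜 x) (Fsummand_summable 𝕜 y)
  map_smul' c x := by
    simp only [ZeroAtInftyContinuousMap.coe_smul, Pi.smul_apply, smul_eq_mul,
      RingHom.id_apply]
    rw [← tsum_mul_left]
    congr 1
    funext n
    ring

lemma Flin_bound (x : CZ) : ‖Flin 𝕜 x‖ ≤ 1 * ‖x‖ := by
  have h1 : ‖Flin 𝕜 x‖ ≤ ∑' n, wgt n * ‖x n‖ := by
    have := norm_tsum_le_tsum_norm (f := fun n => ((wgt n : ℝ) : 𝕜) * x n)
      ((Fsummand_summable 𝕜 x).norm)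
    refine this.trans_eq (tsum_congr fun n => ?_)
    rw [norm_mul, RCLike.norm_ofReal, abs_of_nonneg (wgt_pos n).le]
  have h2 : ∑' n, wgt n * ‖x n‖ ≤ ∑' n, wgt n * ‖x‖ := by
    apply Summable.tsum_le_tsum (fun n =>
        mul_le_mul_of_nonneg_left (czero_apply_norm_le 𝕜 x n) (wgt_pos n).le)
      _ (wgt_summable.mul_right ‖x‖)
    apply Summable.of_nonneg_of_le (fun n => mul_nonneg (wgt_pos n).le (norm_nonneg _))
      (fun n => mul_le_mul_of_nonneg_left (czero_apply_norm_le 𝕜 x n) (wgt_pos n).le)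
      (wgt_summable.mul_right ‖x‖)
  rw [tsum_mul_right, wgt_tsum, one_mul] at h2
  calc ‖Flin 𝕜 x‖ ≤ ∑' n, wgt n * ‖x n‖ := h1
    _ ≤ ‖x‖ := h2
    _ = 1 * ‖x‖ := (one_mul _).symm

/-- the witness functional on c₀ -/
noncomputable def Fcl : CZ →L[𝕜] 𝕜 := (Flin 𝕜).mkContinuous 1 (Flin_bound 𝕜)

lemma Fcl_apply (x : CZ) : Fcl 𝕜 x = ∑' n, ((wgt n : ℝ) : 𝕜) * x n := rfl

/-- the truncated indicator -/
noncomputable def indc (N : ℕ) : CZ :=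
  fsc 𝕜 (fun n => if n ≤ N then (1:𝕜) else 0) ((Set.finite_Iic N).subset (by
    intro m hm
    simp only [Function.mem_support] at hm
    by_contra hne
    simp only [Set.mem_Iic] at hne
    exact hm (if_neg hne)))

lemma indc_norm_le (N : ℕ) : ‖indc 𝕜 N‖ ≤ 1 := by
  rw [← ZeroAtInftyContinuousMap.norm_toBCF_eq_norm]
  apply BoundedContinuousFunction.norm_le zero_le_one |>.mpr
  intro n
  show ‖if n ≤ N then (1:𝕜) else 0‖ ≤ 1
  split <;> simp

lemma Fcl_indc (N : ℕ) : Fcl 𝕜 (indc 𝕜 N) = ((1 - (2:ℝ)⁻¹ ^ (N+1) : ℝ) : 𝕜) := by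
  rw [Fcl_apply]
  have : ∑' n, ((wgt n : ℝ) : 𝕜) * (indc 𝕜 N) n
      = ∑ n ∈ Finset.range (N+1), ((wgt n : ℝ) : 𝕜) * (indc 𝕜 N) n := by
    apply tsum_eq_sum
    intro n hn
    have : ¬ n ≤ N := by simpa using hn
    show ((wgt n : ℝ) : 𝕜) * (if n ≤ N then (1:𝕜) else 0) = 0
    rw [if_neg this, mul_zero]
  rw [this]
  have : ∀ n ∈ Finset.range (N+1), ((wgt n : ℝ) : 𝕜) * (indc 𝕜 N) n = ((wgt n : ℝ) : 𝕜) := by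
    intro n hn
    have hn' : n ≤ N := by simpa [Nat.lt_succ_iff] using hn
    show ((wgt n : ℝ) : 𝕜) * (if n ≤ N then (1:𝕜) else 0) = _
    rw [if_pos hn', mul_one]
  rw [Finset.sum_congr rfl this, ← RCLike.ofReal_sum, wgt_sum]

lemma Fcl_norm_ge : 1 ≤ ‖Fcl 𝕜‖ := by
  have key : ∀ N : ℕ, 1 - (2:ℝ)⁻¹ ^ (N+1) ≤ ‖Fcl 𝕜‖ := by
    intro N
    have h1 := (Fcl 𝕜).le_opNorm (indc 𝕜 N)
    rw [Fcl_indc] at h1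
    have h2 : ‖(((1 - (2:ℝ)⁻¹ ^ (N+1) : ℝ)) : 𝕜)‖ = 1 - (2:ℝ)⁻¹ ^ (N+1) := by
      rw [RCLike.norm_ofReal, abs_of_nonneg]
      have : (2:ℝ)⁻¹ ^ (N+1) ≤ 1 := by
        apply pow_le_one₀ <;> norm_num
      linarith
    rw [h2] at h1
    calc 1 - (2:ℝ)⁻¹ ^ (N+1) ≤ ‖Fcl 𝕜‖ * ‖indc 𝕜 N‖ := h1
      _ ≤ ‖Fcl 𝕜‖ * 1 := by
          exact mul_le_mul_of_nonneg_left (indc_norm_le 𝕜 N) (ContinuousLinearMap.opNorm_nonneg _)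
      _ = ‖Fcl 𝕜‖ := mul_one _
  by_contra hlt
  push_neg at hlt
  obtain ⟨N, hN⟩ := exists_pow_lt_of_lt_one (by linarith : (0:ℝ) < 1 - ‖Fcl 𝕜‖)
    (by norm_num : (2:ℝ)⁻¹ < 1)
  have hmono : (2:ℝ)⁻¹ ^ (N+1) ≤ (2:ℝ)⁻¹ ^ N :=
    pow_le_pow_of_le_one (by norm_num) (by norm_num) (Nat.le_succ N)
  have := key N
  linarith

lemma Fcl_strict (x : CZ) (hx : ‖x‖ ≤ 1) (N : ℕ) (hxN : ‖x N‖ ≤ 2⁻¹) :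
    ‖Fcl 𝕜 x‖ ≤ 1 - wgt N * 2⁻¹ := by
  have hsum1 : Summable (fun n => wgt n * ‖x n‖) := by
    apply Summable.of_nonneg_of_le (fun n => mul_nonneg (wgt_pos n).le (norm_nonneg _))
      (fun n => mul_le_mul_of_nonneg_left (czero_apply_norm_le 𝕜 x n) (wgt_pos n).le)
      (wgt_summable.mul_right ‖x‖)
  have hsumite : Summable (fun n => if n = N then wgt N * 2⁻¹ else 0) :=
    (hasSum_ite_eq N (wgt N * 2⁻¹)).summable
  have h1 : ‖Fcl 𝕜 x‖ ≤ ∑' n, wgt n * ‖x n‖ := by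
    rw [Fcl_apply]
    have := norm_tsum_le_tsum_norm (f := fun n => ((wgt n : ℝ) : 𝕜) * x n)
      ((Fsummand_summable 𝕜 x).norm)
    refine this.trans_eq (tsum_congr fun n => ?_)
    rw [norm_mul, RCLike.norm_ofReal, abs_of_nonneg (wgt_pos n).le]
  have h2 : ∑' n, wgt n * ‖x n‖ ≤ ∑' n, (wgt n - if n = N then wgt N * 2⁻¹ else 0) := by
    apply Summable.tsum_le_tsum _ hsum1 (wgt_summable.sub hsumite)
    intro n
    by_cases hn : n = N
    · subst hn
      rw [if_pos rfl]
      have := mul_le_mul_of_nonneg_left hxN (wgt_pos n).le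
      linarith
    · rw [if_neg hn, sub_zero]
      have hxn : ‖x n‖ ≤ 1 := (czero_apply_norm_le 𝕜 x n).trans hx
      have := mul_le_mul_of_nonneg_left hxn (wgt_pos n).le
      linarith
  have h3 : ∑' n, (wgt n - if n = N then wgt N * 2⁻¹ else 0) = 1 - wgt N * 2⁻¹ := by
    rw [Summable.tsum_sub wgt_summable hsumite, wgt_tsum, tsum_ite_eq]
  linarith [h1.trans (h2.trans_eq h3)]

/-- c₀ is not reflexive -/
lemma czero_not_reflexive :
    ¬ Function.Surjective (NormedSpace.inclusionInDoubleDual 𝕜 CZ) := by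
  intro hsurj
  have hF0 : Fcl 𝕜 ≠ 0 := by
    intro h
    have := Fcl_norm_ge 𝕜
    rw [h] at this
    rw [show ‖(0 : (ZeroAtInftyContinuousMap ℕ 𝕜) →L[𝕜] 𝕜)‖ = 0 from ContinuousLinearMap.opNorm_zero] at this
    linarith
  obtain ⟨Φ, hΦ1, hΦF⟩ := exists_dual_vector 𝕜 (Fcl 𝕜) (by have := Fcl_norm_ge 𝕜; have := hF0; positivity)
  obtain ⟨x, hx⟩ := hsurj Φ
  have hxnorm : ‖x‖ = 1 := by
    rw [← hΦ1, ← hx]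
    exact ((NormedSpace.inclusionInDoubleDualLi 𝕜 (E := CZ)).norm_map x).symm
  have hFx : Fcl 𝕜 x = (‖Fcl 𝕜‖ : 𝕜) := by
    have := NormedSpace.dual_def 𝕜 CZ x (Fcl 𝕜)
    rw [hx, hΦF] at this
    exact this.symm
  obtain ⟨N, hN⟩ : ∃ N : ℕ, ‖x N‖ ≤ 2⁻¹ := by
    have h0 := zero_at_infty x
    rw [cocompact_eq_cofinite, Nat.cofinite_eq_atTop] at h0
    have := (NormedAddCommGroup.tendsto_nhds_zero.mp h0 2⁻¹ (by norm_num)).exists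
    obtain ⟨N, hN⟩ := this
    exact ⟨N, hN.le⟩
  have hb := Fcl_strict 𝕜 x hxnorm.le N hN
  rw [hFx, RCLike.norm_ofReal, abs_of_nonneg (by linarith [Fcl_norm_ge 𝕜])] at hb
  have := Fcl_norm_ge 𝕜
  have := wgt_pos N
  linarith

end Func

section Transfer

variable {F G : Type u} [NormedAddCommGroup F] [NormedSpace 𝕜 F]
  [NormedAddCommGroup G] [NormedSpace 𝕜 G]

lemma reflexive_transfer (T : F ≃L[𝕜] G)
    (h : Function.Surjective (NormedSpace.inclusionInDoubleDual 𝕜 F)) :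
    Function.Surjective (NormedSpace.inclusionInDoubleDual 𝕜 G) := by
  intro Φ
  set precomp : (F →L[𝕜] 𝕜) →L[𝕜] (G →L[𝕜] 𝕜) :=
    (ContinuousLinearMap.compL 𝕜 G F 𝕜).flip (T.symm : G →L[𝕜] F) with hpre
  obtain ⟨x, hx⟩ := h (Φ.comp precomp)
  refine ⟨T x, ?_⟩
  ext g
  have h2 : precomp (g.comp (T : F →L[𝕜] G)) = g := by
    ext y
    simp [hpre]
  have h1 : (NormedSpace.inclusionInDoubleDual 𝕜 F x) (g.comp (T : F →L[𝕜] G)) =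
      Φ (precomp (g.comp (T : F →L[𝕜] G))) := by rw [hx]; rfl
  rw [h2] at h1
  rw [NormedSpace.dual_def] at h1 ⊢
  rw [← h1]
  rfl

end Transfer

/-- every infinite-dimensional reflexive Banach space of cardinality 𝔠
carries a non-equivalent complete norm for which it is not reflexive; the new normed
space is realised (isometrically) as a Banach space `E₂` via a linear bijection. -/
theorem stmt15 {𝕜 E : Type u} [RCLike 𝕜] [NormedAddCommGroup E] [NormedSpace 𝕜 E]
    [CompleteSpace E] (hinf : ¬ FiniteDimensional 𝕜 E)
    (hcard : Cardinal.mk E = Cardinal.continuum)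
    (hrefl : Function.Surjective (NormedSpace.inclusionInDoubleDual 𝕜 E)) :
    ∃ (E₂ : Type u) (_ : NormedAddCommGroup E₂) (_ : NormedSpace 𝕜 E₂)
      (_ : CompleteSpace E₂) (T : E ≃ₗ[𝕜] E₂),
      (¬ ∃ c₁ > (0 : ℝ), ∃ c₂ > (0 : ℝ), ∀ u : E,
          c₁ * ‖u‖ ≤ ‖T u‖ ∧ ‖T u‖ ≤ c₂ * ‖u‖) ∧
      ¬ Function.Surjective (NormedSpace.inclusionInDoubleDual 𝕜 E₂) := by
  set C := ZeroAtInftyContinuousMap ℕ 𝕜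
  have hrankE : Module.rank 𝕜 E = Cardinal.continuum :=
    le_antisymm ((rank_le_card 𝕜 E).trans hcard.le) (aux_rank_ge hinf)
  have hrankC : Module.rank 𝕜 C = Cardinal.continuum :=
    le_antisymm ((rank_le_card 𝕜 C).trans (czero_card_le 𝕜)) (aux_rank_ge (czero_not_finiteDimensional 𝕜))
  obtain ⟨T⟩ : Nonempty (E ≃ₗ[𝕜] C) :=
    LinearEquiv.nonempty_equiv_iff_rank_eq.mpr (hrankE.trans hrankC.symm)
  refine ⟨C, inferInstance, inferInstance, inferInstance, T, ?_, czero_not_reflexive 𝕜⟩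
  rintro ⟨c₁, hc₁, c₂, hc₂, hb⟩
  have hcont1 : Continuous (T.toLinearMap : E →ₗ[𝕜] C) :=
    AddMonoidHomClass.continuous_of_bound (T.toLinearMap : E →ₗ[𝕜] C) c₂ (fun u => (hb u).2)
  have hcont2 : Continuous (T.symm.toLinearMap : C →ₗ[𝕜] E) := by
    apply AddMonoidHomClass.continuous_of_bound (T.symm.toLinearMap : C →ₗ[𝕜] E) c₁⁻¹
    intro v
    have h := (hb (T.symm v)).1
    rw [show T (T.symm v) = v from T.apply_symm_apply v] at h
    rw [inv_mul_eq_div, le_div_iff₀ hc₁, mul_comm]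
    exact h
  have Tcle : E ≃L[𝕜] C := { T with continuous_toFun := hcont1, continuous_invFun := hcont2 }
  have hreflC : Function.Surjective (NormedSpace.inclusionInDoubleDual 𝕜 C) :=
    reflexive_transfer Tcle hrefl
  exact czero_not_reflexive 𝕜 hreflC
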